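/- Let S be a join semilattice with least element 0 and greatest element 1. Let L_S be the first-order language with one constant symbol e and a unary relation symbol A_a for each a ∈ S, and let B be the theory consisting of: A_a(e) for each a ∈ S; ∀x (A_1(x) → x ≈ e); ∀x (A_a(x) → A_b(x)) whenever a ≥ b in S; and ∀x ((A_{a_1}(x) ∧ ⋯ ∧ A_{a_n}(x)) → A_b(x)) whenever a_1 ∨ ⋯ ∨ a_n ≥ b in S. Then every quasi-identity in the language L_S is equivalent modulo B to a finite set of quasi-identities each containing at most one variable. -/

import Mathlib

open FirstOrder FirstOrder.Language

universe u w

/-- A quasi-identity whose matrix has `n` universally quantified variables: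
the universal closure of an implication whose premise is a finite (possibly empty)
conjunction of atomic formulas and whose conclusion is an atomic formula. -/
def IsQuasiIdentityN {L : FirstOrder.Language.{u, u}} (n : ℕ) (σ : L.Sentence) : Prop :=
  ∃ (hyps : List (L.BoundedFormula Empty n)) (concl : L.BoundedFormula Empty n),
    (∀ φ ∈ hyps, φ.IsAtomic) ∧ concl.IsAtomic ∧
      σ = BoundedFormula.alls ((hyps.foldr (· ⊓ ·) ⊤).imp concl)

/-- A quasi-identity. -/
def IsQuasiIdentity {L : FirstOrder.Language.{u, u}} (σ : L.Sentence) : Prop :=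
  ∃ n, IsQuasiIdentityN n σ

/-- Two sets `Φ`, `Ψ` of sentences are equivalent modulo a theory `T₀` if
`T₀ ∪ Φ` and `T₀ ∪ Ψ` have exactly the same models. -/
def EquivModulo {L : FirstOrder.Language.{u, u}} (T₀ Φ Ψ : L.Theory) : Prop :=
  ∀ (M : Type w) [L.Structure M] [Nonempty M], M ⊨ T₀ ∪ Φ ↔ M ⊨ T₀ ∪ Ψ

/-- The language `L_S`, with one constant symbol `e` and a unary relation symbol
`A_a` for each element `a` of `S`. -/
def LangS (S : Type u) : FirstOrder.Language.{u, u} where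
  Functions := fun n => match n with
    | 0 => PUnit
    | _ + 1 => PEmpty
  Relations := fun n => match n with
    | 1 => S
    | _ => PEmpty

/-- The constant term `e`. -/
def eTerm (S : Type u) {α : Type*} : (LangS S).Term α :=
  Constants.term (PUnit.unit : (LangS S).Constants)

/-- The atomic formula `A_a(t)`. -/
def relA {S : Type u} {n : ℕ} (a : S) (t : (LangS S).Term (Empty ⊕ Fin n)) :
    (LangS S).BoundedFormula Empty n :=
  Relations.boundedFormula₁ (show (LangS S).Relations 1 from a) t

/-- The theory `B`, consisting of: `A_a(e)` for each `a ∈ S`;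
`∀x (A_1(x) → x ≈ e)`; `∀x (A_a(x) → A_b(x))` whenever `a ≥ b`; and
`∀x ((A_{a_1}(x) ∧ ⋯ ∧ A_{a_n}(x)) → A_b(x))` whenever `a_1 ∨ ⋯ ∨ a_n ≥ b`. -/
def TheoryB (S : Type u) [SemilatticeSup S] [OrderBot S] [OrderTop S] : (LangS S).Theory :=
  {σ | ∃ a : S, σ = relA a (eTerm S)} ∪
  {((relA (⊤ : S) &0).imp ((&0 : (LangS S).Term (Empty ⊕ Fin 1)).bdEqual (eTerm S))).all} ∪
  {σ | ∃ a b : S, b ≤ a ∧ σ = ((relA a &0).imp (relA b &0)).all} ∪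
  {σ | ∃ (l : List S) (b : S), l ≠ [] ∧ b ≤ l.foldr (· ⊔ ·) ⊥ ∧
    σ = (((l.map (fun a => relA a &0)).foldr (· ⊓ ·) ⊤).imp (relA b &0)).all}

namespace QIP

abbrev MyTerm (n : ℕ) := Option (Fin n)

variable {S : Type u} {n : ℕ}

def toTerm : MyTerm n → (LangS S).Term (Empty ⊕ Fin n)
  | none => eTerm S
  | some i => Term.var (Sum.inr i)

inductive MyAtom (S : Type u) (n : ℕ) : Type u
  | eq : MyTerm n → MyTerm n → MyAtom S n
  | rel : S → MyTerm n → MyAtom S n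

def MyAtom.toFormula : MyAtom S n → (LangS S).BoundedFormula Empty n
  | .eq t₁ t₂ => (toTerm t₁).bdEqual (toTerm t₂)
  | .rel a t => relA a (toTerm t)

section Semantics

variable (M : Type w) [(LangS S).Structure M]

def eM : M := Structure.funMap (L := LangS S) (n := 0) (show (LangS S).Functions 0 from PUnit.unit) finZeroElim

lemma realize_eTerm {α : Type*} (v : α → M) : (eTerm S).realize v = eM (S := S) M := by
  show Structure.funMap _ _ = _
  unfold eM
  congr 1
  funext i
  exact i.elim0

def evalT (v : Fin n → M) : MyTerm n → M
  | none => eM (S := S) M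
  | some i => v i

lemma realize_toTerm (v₀ : Empty → M) (v : Fin n → M) (t : MyTerm n) :
    (toTerm (S := S) t).realize (Sum.elim v₀ v) = evalT (S := S) M v t := by
  cases t with
  | none => exact realize_eTerm M _
  | some i => rfl

def evalA (v : Fin n → M) : MyAtom S n → Prop
  | .eq t₁ t₂ => evalT (S := S) M v t₁ = evalT (S := S) M v t₂
  | .rel a t => Structure.RelMap (show (LangS S).Relations 1 from a) ![evalT (S := S) M v t]

lemma realize_toFormula (v₀ : Empty → M) (v : Fin n → M) (A : MyAtom S n) :
    A.toFormula.Realize v₀ v ↔ evalA M v A := by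
  cases A with
  | eq t₁ t₂ =>
    rw [MyAtom.toFormula, BoundedFormula.realize_bdEqual, realize_toTerm, realize_toTerm]
    rfl
  | rel a t =>
    rw [MyAtom.toFormula, relA, BoundedFormula.realize_rel₁, realize_toTerm]
    rfl

def mkSentence (atoms : List (MyAtom S n)) (c : MyAtom S n) : (LangS S).Sentence :=
  BoundedFormula.alls (((atoms.map MyAtom.toFormula).foldr (· ⊓ ·) ⊤).imp c.toFormula)

lemma realize_foldr_inf (l : List ((LangS S).BoundedFormula Empty n)) (v₀ : Empty → M)
    (v : Fin n → M) :
    (l.foldr (· ⊓ ·) ⊤).Realize v₀ v ↔ ∀ φ ∈ l, φ.Realize v₀ v := by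
  induction l with
  | nil => simp
  | cons φ l ih => simp [ih]

lemma realize_mkSentence (atoms : List (MyAtom S n)) (c : MyAtom S n) :
    M ⊨ mkSentence atoms c ↔
      ∀ v : Fin n → M, (∀ A ∈ atoms, evalA M v A) → evalA M v c := by
  unfold mkSentence
  rw [Sentence.Realize, BoundedFormula.realize_alls]
  refine forall_congr' fun v => ?_
  rw [BoundedFormula.realize_imp, realize_foldr_inf, realize_toFormula]
  constructor
  · intro h hA
    exact h fun φ hφ => by
      obtain ⟨A, hA', rfl⟩ := List.mem_map.1 hφ
      exact (realize_toFormula M _ v A).2 (hA A hA')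
  · intro h hφ
    exact h fun A hA => (realize_toFormula M _ v A).1 (hφ _ (List.mem_map_of_mem hA))

end Semantics

end QIP
namespace QIP
section Unif

variable {S : Type u} {n : ℕ}

def subst (θ : Fin n → MyTerm n) : MyTerm n → MyTerm n
  | none => none
  | some i => θ i

def update (θ : Fin n → MyTerm n) (j : Fin n) (s : MyTerm n) : Fin n → MyTerm n :=
  fun k => if θ k = some j then s else θ k

def step (θ : Fin n → MyTerm n) : MyTerm n → MyTerm n → Fin n → MyTerm n
  | some j, s => update θ j s
  | none, some j => update θ j none
  | none, none => θ

def solve : List (MyTerm n × MyTerm n) → Fin n → MyTerm n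
  | [] => fun j => some j
  | (p, q) :: rest =>
    let θ := solve rest
    step θ (subst θ p) (subst θ q)

def Idem (θ : Fin n → MyTerm n) : Prop := ∀ k, subst θ (θ k) = θ k

lemma subst_idem {θ : Fin n → MyTerm n} (h : Idem θ) (t : MyTerm n) :
    subst θ (subst θ t) = subst θ t := by
  cases t with
  | none => rfl
  | some i => exact h i

lemma idem_some {θ : Fin n → MyTerm n} (h : Idem θ) {t : MyTerm n} {j : Fin n}
    (ht : subst θ t = some j) : θ j = some j := by
  cases t with
  | none => simp [subst] at ht
  | some i =>
    have hi := h i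
    show subst θ (some j) = some j
    rw [← ht]
    exact subst_idem h _

lemma update_props {θ : Fin n → MyTerm n} (hθ : Idem θ) {j : Fin n} {s : MyTerm n}
    (hj : θ j = some j) (hs : subst θ s = s) :
    subst (update θ j s) s = s ∧
    (∀ t, subst (update θ j s) (subst θ t) = subst (update θ j s) t) ∧
    Idem (update θ j s) := by
  have hss : subst (update θ j s) s = s := by
    match s, hs with
    | none, _ => rfl
    | some m, hs =>
      have hm : θ m = some m := hs
      show update θ j (some m) m = some m
      unfold update
      by_cases hmj : m = j
      · subst hmj
        rw [if_pos hm]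
      · rw [if_neg (by rw [hm]; simpa using hmj), hm]
  have hcomp : ∀ t, subst (update θ j s) (subst θ t) = subst (update θ j s) t := by
    intro t
    cases t with
    | none => rfl
    | some k =>
      show subst (update θ j s) (θ k) = update θ j s k
      rcases hk : θ k with _ | m
      · show (none : MyTerm n) = update θ j s k
        unfold update
        rw [hk]
        simp
      · have hm : θ m = some m := by
          have := hθ k
          rw [hk] at this
          exact this
        show update θ j s m = update θ j s k
        unfold update
        rw [hk, hm]
  refine ⟨hss, hcomp, fun k => ?_⟩
  show subst (update θ j s) (update θ j s k) = update θ j s k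
  by_cases hkj : θ k = some j
  · have h0 : update θ j s k = s := by unfold update; rw [if_pos hkj]
    rw [h0]
    exact hss
  · have h1 : update θ j s k = θ k := by unfold update; rw [if_neg hkj]
    rw [h1]
    have h2 := hcomp (some k)
    rw [show subst θ (some k) = θ k from rfl] at h2
    rw [h2]
    exact h1

lemma solve_props (eqs : List (MyTerm n × MyTerm n)) :
    Idem (solve eqs) ∧ ∀ p ∈ eqs, subst (solve eqs) p.1 = subst (solve eqs) p.2 := by
  induction eqs with
  | nil => exact ⟨fun k => rfl, by simp⟩
  | cons pq rest ih =>
    obtain ⟨hI, hU⟩ := ih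
    obtain ⟨p, q⟩ := pq
    have hsolve : solve ((p, q) :: rest) = step (solve rest) (subst (solve rest) p)
        (subst (solve rest) q) := rfl
    set θ := solve rest with hθdef
    have main : Idem (solve ((p, q) :: rest)) ∧
        subst (solve ((p, q) :: rest)) p = subst (solve ((p, q) :: rest)) q ∧
        ∀ t₁ t₂ : MyTerm n, subst θ t₁ = subst θ t₂ →
          subst (solve ((p, q) :: rest)) t₁ = subst (solve ((p, q) :: rest)) t₂ := by
      rcases h1 : subst θ p with _ | j
      case none =>
        rcases h2 : subst θ q with _ | j
        case none =>
          have hsv : solve ((p, q) :: rest) = θ := by rw [hsolve, h1, h2]; rfl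
          rw [hsv]
          exact ⟨hI, by rw [h1, h2], fun t₁ t₂ h => by
            rw [← subst_idem hI t₁, ← subst_idem hI t₂, h]⟩
        case some =>
          have hj : θ j = some j := idem_some hI h2
          obtain ⟨hss, hcomp, hI'⟩ := update_props hI hj (rfl : subst θ (none : MyTerm n) = none)
          have hsv : solve ((p, q) :: rest) = update θ j none := by rw [hsolve, h1, h2]; rfl
          rw [hsv]
          refine ⟨hI', ?_, fun t₁ t₂ h => by rw [← hcomp t₁, ← hcomp t₂, h]⟩
          rw [← hcomp p, ← hcomp q, h1, h2]
          show (none : MyTerm n) = update θ j none j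
          unfold update
          rw [if_pos hj]
      case some =>
        have hj : θ j = some j := idem_some hI h1
        obtain ⟨hss, hcomp, hI'⟩ := update_props hI hj (subst_idem hI q)
        have hsv : solve ((p, q) :: rest) = update θ j (subst θ q) := by rw [hsolve, h1]; rfl
        rw [hsv]
        refine ⟨hI', ?_, fun t₁ t₂ h => by rw [← hcomp t₁, ← hcomp t₂, h]⟩
        rw [← hcomp p, ← hcomp q, h1]
        refine Eq.trans ?_ hss.symm
        show update θ j (subst θ q) j = subst θ q
        unfold update
        rw [if_pos hj]
    refine ⟨main.1, ?_⟩
    rintro ⟨p', q'⟩ hp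
    rcases List.mem_cons.1 hp with h | h
    · have hpp : p' = p ∧ q' = q := by simpa using h
      rw [hpp.1, hpp.2]
      exact main.2.1
    · exact main.2.2 _ _ (hU _ h)

end Unif
end QIP
namespace QIP
section Sound

variable {S : Type u} {n : ℕ} {M : Type w} [(LangS S).Structure M]

lemma solve_sound (v : Fin n → M) (eqs : List (MyTerm n × MyTerm n))
    (hv : ∀ p ∈ eqs, evalT (S := S) M v p.1 = evalT (S := S) M v p.2) :
    ∀ k, evalT (S := S) M v (solve eqs k) = v k := by
  induction eqs with
  | nil => intro k; rfl
  | cons pq rest ih =>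
    obtain ⟨p, q⟩ := pq
    have hrest := ih fun p' hp' => hv p' (List.mem_cons_of_mem _ hp')
    have hsub : ∀ t, evalT (S := S) M v (subst (solve rest) t) = evalT (S := S) M v t := by
      intro t
      cases t with
      | none => rfl
      | some k => exact hrest k
    have hpq : evalT (S := S) M v p = evalT (S := S) M v q := hv (p, q) List.mem_cons_self
    set θ := solve rest with hθdef
    have hupd : ∀ (j : Fin n) (s : MyTerm n),
        evalT (S := S) M v s = v j → ∀ k, evalT (S := S) M v (update θ j s k) = v k := by
      intro j s hs k
      unfold update
      by_cases hkj : θ k = some j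
      · rw [if_pos hkj, hs]
        have h3 := hrest k
        rw [hkj] at h3
        exact h3
      · rw [if_neg hkj]
        exact hrest k
    intro k
    show evalT (S := S) M v (step θ (subst θ p) (subst θ q) k) = v k
    rcases h1 : subst θ p with _ | j
    case none =>
      rcases h2 : subst θ q with _ | j
      case none => exact hrest k
      case some =>
        show evalT (S := S) M v (update θ j none k) = v k
        refine hupd j none ?_ k
        have : evalT (S := S) M v (subst θ q) = v j := by rw [h2]; rfl
        show evalT (S := S) M v (none : MyTerm n) = v j
        rw [← this, hsub q, ← hpq, ← hsub p, h1]
    case some =>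
      show evalT (S := S) M v (update θ j (subst θ q) k) = v k
      refine hupd j (subst θ q) ?_ k
      rw [hsub q, ← hpq, ← hsub p, h1]
      rfl

end Sound

section StageA

variable {S : Type u} {n : ℕ}

def eqList : List (MyAtom S n) → List (MyTerm n × MyTerm n) :=
  List.filterMap fun A => match A with
    | .eq p q => some (p, q)
    | .rel _ _ => none

def relList (θ : Fin n → MyTerm n) : List (MyAtom S n) → List (S × MyTerm n) :=
  List.filterMap fun A => match A with
    | .rel a t => some (a, subst θ t)
    | .eq _ _ => none

def substAtom (θ : Fin n → MyTerm n) : MyAtom S n → MyAtom S n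
  | .eq p q => .eq (subst θ p) (subst θ q)
  | .rel a t => .rel a (subst θ t)

variable {M : Type w} [(LangS S).Structure M]

lemma stageA (atoms : List (MyAtom S n)) (c : MyAtom S n) :
    (M ⊨ mkSentence atoms c) ↔
      ∀ v : Fin n → M,
        (∀ p ∈ relList (solve (eqList atoms)) atoms,
          Structure.RelMap (show (LangS S).Relations 1 from p.1) ![evalT (S := S) M v p.2]) →
        evalA M v (substAtom (solve (eqList atoms)) c) := by
  set θ := solve (eqList atoms) with hθdef
  rw [realize_mkSentence]
  constructor
  · intro h v hv
    set w := fun k => evalT (S := S) M v (θ k) with hwdef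
    have hwt : ∀ t, evalT (S := S) M w t = evalT (S := S) M v (subst θ t) := by
      intro t
      cases t with
      | none => rfl
      | some k => rfl
    have hw : ∀ A ∈ atoms, evalA M w A := by
      intro A hA
      cases A with
      | eq p q =>
        show evalT (S := S) M w p = evalT (S := S) M w q
        rw [hwt, hwt]
        have hmem : (p, q) ∈ eqList atoms :=
          List.mem_filterMap.2 ⟨.eq p q, hA, rfl⟩
        have := (solve_props (eqList atoms)).2 (p, q) hmem
        rw [this]
      | rel a t =>
        show Structure.RelMap (show (LangS S).Relations 1 from a) ![evalT (S := S) M w t]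
        rw [hwt]
        exact hv (a, subst θ t) (List.mem_filterMap.2 ⟨.rel a t, hA, rfl⟩)
    have hc := h w hw
    cases c with
    | eq p q =>
      show evalT (S := S) M v (subst θ p) = evalT (S := S) M v (subst θ q)
      rw [← hwt, ← hwt]
      exact hc
    | rel a t =>
      show Structure.RelMap (show (LangS S).Relations 1 from a) ![evalT (S := S) M v (subst θ t)]
      rw [← hwt]
      exact hc
  · intro h v hv
    have hsound : ∀ k, evalT (S := S) M v (θ k) = v k := by
      refine solve_sound v (eqList atoms) ?_
      rintro ⟨p, q⟩ hp
      obtain ⟨A, hA, hmatch⟩ := List.mem_filterMap.1 hp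
      cases A with
      | eq p' q' =>
        obtain ⟨rfl, rfl⟩ : p' = p ∧ q' = q := by
          simpa using hmatch
        exact hv _ hA
      | rel a t => simp at hmatch
    have hsub : ∀ t, evalT (S := S) M v (subst θ t) = evalT (S := S) M v t := by
      intro t
      cases t with
      | none => rfl
      | some k => exact hsound k
    have hc := h v ?_
    · cases c with
      | eq p q =>
        show evalT (S := S) M v p = evalT (S := S) M v q
        rw [← hsub p, ← hsub q]
        exact hc
      | rel a t =>
        show Structure.RelMap (show (LangS S).Relations 1 from a) ![evalT (S := S) M v t]
        rw [← hsub t]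
        exact hc
    · rintro ⟨a, t'⟩ hp
      obtain ⟨A, hA, hmatch⟩ := List.mem_filterMap.1 hp
      cases A with
      | eq p' q' => simp at hmatch
      | rel a' t =>
        obtain ⟨rfl, rfl⟩ : a' = a ∧ subst θ t = t' := by
          simpa using hmatch
        show Structure.RelMap (show (LangS S).Relations 1 from a') ![evalT (S := S) M v (subst θ t)]
        rw [hsub t]
        exact hv (.rel a' t) hA

end StageA
end QIP
namespace QIP
variable {S : Type u} {n : ℕ}
lemma exists_myTerm (t : (LangS S).Term (Empty ⊕ Fin n)) : ∃ u : MyTerm n, t = toTerm u := by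
  induction t with
  | var x =>
    rcases x with e | i
    · exact e.elim
    · exact ⟨some i, rfl⟩
  | @func l f ts ih =>
    cases l with
    | zero =>
      refine ⟨none, ?_⟩
      show _ = eTerm S
      unfold eTerm Constants.term
      cases f
      congr 1
      funext i
      exact i.elim0
    | succ m => exact PEmpty.elim f

lemma toFormula_isAtomic (A : MyAtom S n) : A.toFormula.IsAtomic := by
  cases A with
  | eq t₁ t₂ => exact BoundedFormula.IsAtomic.equal _ _
  | rel a t => exact BoundedFormula.IsAtomic.rel _ _

lemma exists_myAtom {φ : (LangS S).BoundedFormula Empty n} (h : φ.IsAtomic) :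
    ∃ A : MyAtom S n, φ = A.toFormula := by
  cases h with
  | equal t₁ t₂ =>
    obtain ⟨u₁, rfl⟩ := exists_myTerm t₁
    obtain ⟨u₂, rfl⟩ := exists_myTerm t₂
    exact ⟨.eq u₁ u₂, rfl⟩
  | @rel l R ts =>
    match l, R with
    | 1, R =>
      obtain ⟨u, hu⟩ := exists_myTerm (ts 0)
      refine ⟨.rel R u, ?_⟩
      show Relations.boundedFormula R ts = relA R (toTerm u)
      unfold relA Relations.boundedFormula₁
      congr 1
      funext i
      have hi : i = 0 := Subsingleton.elim i 0
      rw [hi]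
      exact hu

lemma exists_atomList (l : List ((LangS S).BoundedFormula Empty n))
    (h : ∀ φ ∈ l, φ.IsAtomic) : ∃ atoms : List (MyAtom S n), l = atoms.map MyAtom.toFormula := by
  induction l with
  | nil => exact ⟨[], rfl⟩
  | cons φ l ih =>
    obtain ⟨atoms, rfl⟩ := ih fun ψ hψ => h ψ (List.mem_cons_of_mem _ hψ)
    obtain ⟨A, rfl⟩ := exists_myAtom (h φ List.mem_cons_self)
    exact ⟨A :: atoms, rfl⟩

end QIP
namespace QIP
section StageB

variable {S : Type u} {n : ℕ}

abbrev RA (a : S) : (LangS S).Relations 1 := a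

def specT (j : Fin n) (t : MyTerm n) : MyTerm 1 := if t = some j then some 0 else none

def tau (rels : List (S × MyTerm n)) (j : Fin n) (c1 : MyAtom S 1) : (LangS S).Sentence :=
  mkSentence (rels.map fun p => MyAtom.rel p.1 (specT j p.2)) c1

lemma tau_isQI (rels : List (S × MyTerm n)) (j : Fin n) (c1 : MyAtom S 1) :
    ∃ m ≤ 1, ∃ (hyps : List ((LangS S).BoundedFormula Empty m))
      (concl : (LangS S).BoundedFormula Empty m),
      (∀ φ ∈ hyps, φ.IsAtomic) ∧ concl.IsAtomic ∧
        tau rels j c1 = BoundedFormula.alls ((hyps.foldr (· ⊓ ·) ⊤).imp concl) := by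
  refine ⟨1, le_refl 1, (rels.map fun p => MyAtom.rel p.1 (specT j p.2)).map MyAtom.toFormula,
    c1.toFormula, ?_, toFormula_isAtomic c1, ?_⟩
  · intro φ hφ
    obtain ⟨A, _, rfl⟩ := List.mem_map.1 hφ
    exact toFormula_isAtomic A
  · rfl

variable {M : Type w} [(LangS S).Structure M]

def Holds (M : Type w) [(LangS S).Structure M] (rels : List (S × MyTerm n))
    (v : Fin n → M) : Prop :=
  ∀ p ∈ rels, Structure.RelMap (RA p.1) ![evalT (S := S) M v p.2]

def pointv (S : Type u) {M : Type w} [(LangS S).Structure M] {n : ℕ} (j : Fin n) (x : M) : Fin n → M := fun i => if i = j then x else eM (S := S) M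

lemma evalT_pointv (j : Fin n) (x : M) (t : MyTerm n) :
    evalT (S := S) M (pointv S j x) t = if t = some j then x else eM (S := S) M := by
  cases t with
  | none => simp [evalT]
  | some i =>
    show pointv S j x i = _
    by_cases h : i = j <;> simp [pointv, h]

lemma holds_pointv (hB : ∀ a : S, Structure.RelMap (RA a) ![eM (S := S) M])
    (rels : List (S × MyTerm n)) (j : Fin n) (x : M)
    (hx : ∀ p ∈ rels, p.2 = some j → Structure.RelMap (RA p.1) ![x]) :
    Holds M rels (pointv S j x) := by
  intro p hp
  rw [evalT_pointv]
  by_cases h2 : p.2 = some j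
  · rw [if_pos h2]
    exact hx p hp h2
  · rw [if_neg h2]
    exact hB p.1

lemma realize_tau (hB : ∀ a : S, Structure.RelMap (RA a) ![eM (S := S) M])
    (rels : List (S × MyTerm n)) (j : Fin n) (c1 : MyAtom S 1) :
    M ⊨ tau rels j c1 ↔
      ∀ x : M, (∀ p ∈ rels, p.2 = some j → Structure.RelMap (RA p.1) ![x]) →
        evalA M (fun _ => x) c1 := by
  rw [tau, realize_mkSentence]
  constructor
  · intro h x hx
    refine h (fun _ => x) ?_
    intro A hA
    obtain ⟨p, hp, rfl⟩ := List.mem_map.1 hA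
    show Structure.RelMap (RA p.1) ![evalT (S := S) M (fun _ => x) (specT j p.2)]
    unfold specT
    by_cases h2 : p.2 = some j
    · rw [if_pos h2]
      exact hx p hp h2
    · rw [if_neg h2]
      exact hB p.1
  · intro h v hv
    have hveq : v = fun _ => v 0 := funext fun i => by rw [Subsingleton.elim i (0 : Fin 1)]
    rw [hveq]
    refine h (v 0) ?_
    intro p hp h2
    have h3 := hv (.rel p.1 (specT j p.2)) (List.mem_map_of_mem hp)
    have h4 : specT j p.2 = some 0 := by unfold specT; rw [if_pos h2]
    rw [h4] at h3
    exact h3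

lemma relCase (hB : ∀ a : S, Structure.RelMap (RA a) ![eM (S := S) M])
    (rels : List (S × MyTerm n)) (b : S) (j : Fin n) :
    (∀ v : Fin n → M, Holds M rels v →
        Structure.RelMap (RA b) ![evalT (S := S) M v (some j)]) ↔
      M ⊨ tau rels j (.rel b (some 0)) := by
  rw [realize_tau hB]
  constructor
  · intro h x hx
    have := h (pointv S j x) (holds_pointv hB rels j x hx)
    show Structure.RelMap (RA b) ![x]
    have he : evalT (S := S) M (pointv S j x) (some j) = x := by
      rw [evalT_pointv]; simp
    rwa [he] at this
  · intro h v hv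
    refine h (v j) ?_
    intro p hp h2
    have := hv p hp
    rwa [h2] at this

lemma eqCaseFwd (hB : ∀ a : S, Structure.RelMap (RA a) ![eM (S := S) M])
    (rels : List (S × MyTerm n)) {u₁ u₂ : MyTerm n} (hne : u₁ ≠ u₂) {j : Fin n}
    (hj : u₁ = some j ∨ u₂ = some j)
    (h : ∀ v : Fin n → M, Holds M rels v →
      evalT (S := S) M v u₁ = evalT (S := S) M v u₂) :
    M ⊨ tau rels j (.eq (some 0) none) := by
  rw [realize_tau hB]
  intro x hx
  have hv := h (pointv S j x) (holds_pointv hB rels j x hx)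
  rw [evalT_pointv, evalT_pointv] at hv
  show x = eM (S := S) M
  rcases hj with rfl | rfl
  · rw [if_pos rfl, if_neg (fun hc => hne hc.symm)] at hv
    exact hv
  · rw [if_pos rfl, if_neg hne] at hv
    exact hv.symm

lemma eqCaseBwd (hB : ∀ a : S, Structure.RelMap (RA a) ![eM (S := S) M])
    (rels : List (S × MyTerm n)) (u : MyTerm n)
    (h : ∀ j : Fin n, u = some j → M ⊨ tau rels j (.eq (some 0) none))
    (v : Fin n → M) (hv : Holds M rels v) :
    evalT (S := S) M v u = eM (S := S) M := by
  cases u with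
  | none => rfl
  | some j =>
    have h1 := (realize_tau hB rels j (.eq (some 0) none)).1 (h j rfl) (v j) ?_
    · exact h1
    · intro p hp h2
      have := hv p hp
      rwa [h2] at this

end StageB
end QIP
namespace QIP
section Final

variable {S : Type u}

def tset {n : ℕ} (rels : List (S × MyTerm n)) : MyTerm n → Set ((LangS S).Sentence)
  | some j => {tau rels j (.eq (some 0) none)}
  | none => ∅

lemma tset_finite {n : ℕ} (rels : List (S × MyTerm n)) (u : MyTerm n) :
    (tset rels u).Finite := by
  cases u with
  | none => exact Set.finite_empty
  | some j => exact Set.finite_singleton _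

lemma mem_tset {n : ℕ} (rels : List (S × MyTerm n)) {j : Fin n} {u : MyTerm n}
    (h : u = some j) : tau rels j (.eq (some 0) none) ∈ tset rels u := by
  subst h
  exact rfl

lemma tset_sub {n : ℕ} (rels : List (S × MyTerm n)) (u : MyTerm n) :
    ∀ τ ∈ tset rels u, ∃ j : Fin n, u = some j ∧ τ = tau rels j (.eq (some 0) none) := by
  cases u with
  | none => intro τ hτ; exact absurd hτ (Set.notMem_empty τ)
  | some j => intro τ hτ; exact ⟨j, rfl, hτ⟩

variable [SemilatticeSup S] [OrderBot S] [OrderTop S]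

lemma modelB_eM {M : Type w} [(LangS S).Structure M] (h : M ⊨ TheoryB S) (a : S) :
    Structure.RelMap (RA a) ![eM (S := S) M] := by
  have hmem : (relA a (eTerm S) : (LangS S).Sentence) ∈ TheoryB S :=
    Or.inl (Or.inl (Or.inl ⟨a, rfl⟩))
  have h2 := h.realize_of_mem (relA a (eTerm S)) hmem
  have h3 : Structure.RelMap (RA a)
      ![(eTerm S).realize (Sum.elim (default : Empty → M) (default : Fin 0 → M))] :=
    BoundedFormula.realize_rel₁.1 h2
  rwa [realize_eTerm] at h3

end Final
end QIP


/-- Let `S` be a join semilattice with least element `0` and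
greatest element `1`, and let `B` be the theory above in the language `L_S`.
Then every quasi-identity in the language `L_S` is equivalent modulo `B` to a
finite set of quasi-identities each containing at most one variable. -/
theorem every_quasiIdentity_equiv_one_variable (S : Type u)
    [SemilatticeSup S] [OrderBot S] [OrderTop S] :
    ∀ σ : (LangS S).Sentence, IsQuasiIdentity σ →
      ∃ Ψ : (LangS S).Theory, Ψ.Finite ∧ (∀ τ ∈ Ψ, ∃ n ≤ 1, IsQuasiIdentityN n τ) ∧
        EquivModulo.{u, w} (TheoryB S) {σ} Ψ := by
  rintro σ ⟨n, hyps, concl, hhyps, hconcl, rfl⟩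
  obtain ⟨atoms, rfl⟩ := QIP.exists_atomList hyps hhyps
  obtain ⟨c, rfl⟩ := QIP.exists_myAtom hconcl
  set θ := QIP.solve (QIP.eqList atoms) with hθdef
  set rels := QIP.relList θ atoms with hrelsdef
  have key : ∀ (M : Type w) [(LangS S).Structure M],
      (M ⊨ QIP.mkSentence atoms c ↔
        ∀ v : Fin n → M, QIP.Holds M rels v → QIP.evalA M v (QIP.substAtom θ c)) :=
    fun M _ => QIP.stageA atoms c
  have hσeq : BoundedFormula.alls
      (((List.map QIP.MyAtom.toFormula atoms).foldr (· ⊓ ·) ⊤).imp c.toFormula) =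
      QIP.mkSentence atoms c := rfl
  rw [hσeq]
  rcases hc : QIP.substAtom θ c with ⟨u₁, u₂⟩ | ⟨b, u⟩
  · -- conclusion is an equality u₁ = u₂
    by_cases hu : u₁ = u₂
    · -- trivial equality
      refine ⟨∅, Set.finite_empty, by simp, ?_⟩
      intro M _ _
      rw [Theory.model_union_iff, Theory.model_union_iff]
      refine and_congr_right fun hB => ?_
      rw [Theory.model_singleton_iff]
      constructor
      · intro _; exact (Theory.model_iff (∅ : (LangS S).Theory)).2 (by simp)
      · intro _
        rw [key M]
        intro v _
        rw [hc]
        subst hu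
        exact rfl
    · -- nontrivial equality
      refine ⟨QIP.tset rels u₁ ∪ QIP.tset rels u₂,
        (QIP.tset_finite rels u₁).union (QIP.tset_finite rels u₂), ?_, ?_⟩
      · intro τ hτ
        rcases hτ with hτ | hτ
        · obtain ⟨j, -, rfl⟩ := QIP.tset_sub rels u₁ τ hτ
          exact QIP.tau_isQI rels j _
        · obtain ⟨j, -, rfl⟩ := QIP.tset_sub rels u₂ τ hτ
          exact QIP.tau_isQI rels j _
      · intro M _ _
        rw [Theory.model_union_iff, Theory.model_union_iff]
        refine and_congr_right fun hB => ?_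
        have hB' := QIP.modelB_eM hB
        rw [Theory.model_singleton_iff, key M, hc]
        constructor
        · intro h
          rw [Theory.model_iff]
          intro τ hτ
          rcases hτ with hτ | hτ
          · obtain ⟨j, hj, rfl⟩ := QIP.tset_sub rels u₁ τ hτ
            exact QIP.eqCaseFwd hB' rels hu (Or.inl hj) h
          · obtain ⟨j, hj, rfl⟩ := QIP.tset_sub rels u₂ τ hτ
            exact QIP.eqCaseFwd hB' rels hu (Or.inr hj) h
        · intro h v hv
          rw [Theory.model_iff] at h
          have h1 : QIP.evalT (S := S) M v u₁ = QIP.eM (S := S) M := by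
            refine QIP.eqCaseBwd hB' rels u₁ ?_ v hv
            intro j hj
            exact h _ (Or.inl (QIP.mem_tset rels hj))
          have h2 : QIP.evalT (S := S) M v u₂ = QIP.eM (S := S) M := by
            refine QIP.eqCaseBwd hB' rels u₂ ?_ v hv
            intro j hj
            exact h _ (Or.inr (QIP.mem_tset rels hj))
          show QIP.evalT (S := S) M v u₁ = QIP.evalT (S := S) M v u₂
          rw [h1, h2]
  · -- conclusion is a relation A_b(u)
    cases u with
    | none =>
      refine ⟨∅, Set.finite_empty, by simp, ?_⟩
      intro M _ _
      rw [Theory.model_union_iff, Theory.model_union_iff]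
      refine and_congr_right fun hB => ?_
      rw [Theory.model_singleton_iff]
      constructor
      · intro _; exact (Theory.model_iff (∅ : (LangS S).Theory)).2 (by simp)
      · intro _
        rw [key M]
        intro v _
        rw [hc]
        exact QIP.modelB_eM hB b
    | some j =>
      refine ⟨{QIP.tau rels j (.rel b (some 0))}, Set.finite_singleton _, ?_, ?_⟩
      · intro τ hτ
        rw [Set.mem_singleton_iff] at hτ
        subst hτ
        exact QIP.tau_isQI rels j _
      · intro M _ _
        rw [Theory.model_union_iff, Theory.model_union_iff]
        refine and_congr_right fun hB => ?_
        have hB' := QIP.modelB_eM hB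
        rw [Theory.model_singleton_iff, Theory.model_singleton_iff, key M, hc]
        exact QIP.relCase hB' rels b j
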